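/- Let A be a commutative ring. The assignment ε(a) ↦ (class of w₂₁(−1)x₂₁(a)) induces a well-defined group isomorphism γ: C(A) → St(2,A)/C(2,A), and γ restricts to an isomorphism from U(A) := ker(ψ: C(A) → SL₂(A)) onto K₂(2,A)/C(2,A). In particular U(A) ≅ K₂(2,A)/C(2,A). -/

import Mathlib

open Matrix

/-- The word `h(u) = ε(-u)ε(-u⁻¹)ε(-u)` in the free group on the symbols `ε(a)`, `a ∈ A`. -/
def hFree {A : Type*} [CommRing A] (u : Aˣ) : FreeGroup A :=
  FreeGroup.of (-(u : A)) * FreeGroup.of (-((u⁻¹ : Aˣ) : A)) * FreeGroup.of (-(u : A))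

/-- The defining relations of Cohn's group C(A). -/
def CRels (A : Type*) [CommRing A] : Set (FreeGroup A) :=
  {x | ∃ u v : Aˣ, x = hFree u * hFree v * (hFree (u * v))⁻¹} ∪
  {x | ∃ a b : A, x = FreeGroup.of a * FreeGroup.of (0 : A) * FreeGroup.of b *
      (hFree (-1) * FreeGroup.of (a + b))⁻¹} ∪
  {x | ∃ (u : Aˣ) (a : A), x = hFree u * FreeGroup.of a * hFree u *
      (FreeGroup.of ((u : A) ^ 2 * a))⁻¹}

/-- Cohn's group C(A), presented by generators ε(a), a ∈ A, and the three families of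
relations h(u)h(v) = h(uv), ε(a)ε(0)ε(b) = h(-1)ε(a+b), h(u)ε(a)h(u) = ε(u²a). -/
abbrev CGroup (A : Type*) [CommRing A] := PresentedGroup (CRels A)

/-- The generator ε(a) of C(A). -/
def epsC {A : Type*} [CommRing A] (a : A) : CGroup A := PresentedGroup.of a

/-- h(u) = ε(-u)ε(-u⁻¹)ε(-u) in C(A). -/
def hC {A : Type*} [CommRing A] (u : Aˣ) : CGroup A :=
  epsC (-(u : A)) * epsC (-((u⁻¹ : Aˣ) : A)) * epsC (-(u : A))

/-- y(a) = ε(0)³ε(a) in C(A). -/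
def yC {A : Type*} [CommRing A] (a : A) : CGroup A := (epsC (0 : A)) ^ 3 * epsC a

/-- ȳ(a) = ε(-a)ε(0)³ in C(A). -/
def ybarC {A : Type*} [CommRing A] (a : A) : CGroup A := epsC (-a) * (epsC (0 : A)) ^ 3

/-- β(u,a) = h(u)y(ua) in C(A). -/
def betaC {A : Type*} [CommRing A] (u : Aˣ) (a : A) : CGroup A := hC u * yC ((u : A) * a)

/-- E(a) = [[a,1],[-1,0]] as an element of SL₂. -/
def ESL {A : Type*} [CommRing A] (a : A) : Matrix.SpecialLinearGroup (Fin 2) A :=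
  ⟨!![a, 1; -1, 0], by simp [Matrix.det_fin_two_of]⟩

/-- D(u) = diag(u, u⁻¹) as an element of SL₂. -/
def DSL {A : Type*} [CommRing A] (u : Aˣ) : Matrix.SpecialLinearGroup (Fin 2) A :=
  ⟨!![(u : A), 0; 0, ((u⁻¹ : Aˣ) : A)], by simp [Matrix.det_fin_two_of]⟩

theorem ESL_h {A : Type*} [CommRing A] (u : Aˣ) :
    ESL (-(u : A)) * ESL (-((u⁻¹ : Aˣ) : A)) * ESL (-(u : A)) = DSL u := by
  apply Subtype.ext
  show (!![-(u:A), 1; -1, 0] * !![-((u⁻¹:Aˣ):A), 1; -1, 0]) * !![-(u:A), 1; -1, 0] = _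
  ext i j
  fin_cases i <;> fin_cases j <;>
    simp [DSL, Matrix.mul_apply, Fin.sum_univ_two]

theorem DSL_mul {A : Type*} [CommRing A] (u v : Aˣ) : DSL u * DSL v = DSL (u * v) := by
  apply Subtype.ext
  show (!![(u:A), 0; 0, ((u⁻¹:Aˣ):A)] * !![(v:A), 0; 0, ((v⁻¹:Aˣ):A)]) = _
  ext i j
  fin_cases i <;> fin_cases j <;>
    simp [DSL, Matrix.mul_apply, Fin.sum_univ_two, mul_comm]

theorem ESL_rel2 {A : Type*} [CommRing A] (a b : A) :
    ESL a * ESL (0 : A) * ESL b = DSL (-1) * ESL (a + b) := by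
  apply Subtype.ext
  show (!![a, 1; -1, 0] * !![(0:A), 1; -1, 0]) * !![b, 1; -1, 0] = (DSL (-1 : Aˣ)).1 * (ESL (a + b)).1
  ext i j
  fin_cases i <;> fin_cases j <;>
    simp [DSL, ESL, Matrix.mul_apply, Fin.sum_univ_two]

theorem ESL_rel3 {A : Type*} [CommRing A] (u : Aˣ) (a : A) :
    DSL u * ESL a * DSL u = ESL ((u : A) ^ 2 * a) := by
  apply Subtype.ext
  show (!![(u:A), 0; 0, ((u⁻¹:Aˣ):A)] * !![a, 1; -1, 0]) * !![(u:A), 0; 0, ((u⁻¹:Aˣ):A)] = _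
  ext i j
  fin_cases i <;> fin_cases j <;>
    simp [ESL, Matrix.mul_apply, Fin.sum_univ_two] <;> ring

theorem lift_hFree {A : Type*} [CommRing A] (u : Aˣ) :
    FreeGroup.lift (fun a : A => ESL a) (hFree u) = DSL u := by
  simp only [hFree, _root_.map_mul, FreeGroup.lift_apply_of]
  exact ESL_h u

theorem CRels_liftable {A : Type*} [CommRing A] :
    ∀ r ∈ CRels A, FreeGroup.lift (fun a : A => ESL a) r = 1 := by
  rintro r ((⟨u, v, rfl⟩ | ⟨a, b, rfl⟩) | ⟨u, a, rfl⟩)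
  · rw [_root_.map_mul, _root_.map_mul, map_inv, lift_hFree, lift_hFree, lift_hFree, DSL_mul,
      mul_inv_cancel]
  · simp only [_root_.map_mul, map_inv, FreeGroup.lift_apply_of, lift_hFree]
    rw [ESL_rel2, mul_inv_cancel]
  · simp only [_root_.map_mul, map_inv, FreeGroup.lift_apply_of, lift_hFree]
    rw [ESL_rel3, mul_inv_cancel]

/-- The homomorphism ψ : C(A) → SL₂(A) with ψ(ε(a)) = E(a). -/
def psiC (A : Type*) [CommRing A] : CGroup A →* Matrix.SpecialLinearGroup (Fin 2) A :=
  PresentedGroup.toGroup CRels_liftable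

@[simp] theorem psiC_epsC {A : Type*} [CommRing A] (a : A) : psiC A (epsC a) = ESL a :=
  PresentedGroup.toGroup.of _
open Matrix

/-- The generator x₁₂(t) (for `b = true`) or x₂₁(t) (for `b = false`) in the free group. -/
def xF {A : Type*} (b : Bool) (t : A) : FreeGroup (Bool × A) := FreeGroup.of (b, t)

/-- The word w_ij(u) = x_ij(u) x_ji(-u⁻¹) x_ij(u). -/
def wFSt {A : Type*} [CommRing A] (b : Bool) (u : Aˣ) : FreeGroup (Bool × A) :=
  xF b (u : A) * xF (!b) (-((u⁻¹ : Aˣ) : A)) * xF b (u : A)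

/-- The defining relations of the rank-one Steinberg group St(2,A). -/
def StRels (A : Type*) [CommRing A] : Set (FreeGroup (Bool × A)) :=
  {x | ∃ (b : Bool) (s t : A), x = xF b s * xF b t * (xF b (s + t))⁻¹} ∪
  {x | ∃ (b : Bool) (u : Aˣ) (t : A),
    x = wFSt b u * xF b t * wFSt b (-u) * (xF (!b) (-(((u⁻¹ : Aˣ) : A) ^ 2 * t)))⁻¹}

/-- The rank-one Steinberg group St(2,A). -/
abbrev St2 (A : Type*) [CommRing A] := PresentedGroup (StRels A)

/-- The generators of St(2,A): `xSt true t = x₁₂(t)`, `xSt false t = x₂₁(t)`. -/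
def xSt {A : Type*} [CommRing A] (b : Bool) (t : A) : St2 A := PresentedGroup.of (b, t)

/-- w_ij(u) in St(2,A). -/
def wSt {A : Type*} [CommRing A] (b : Bool) (u : Aˣ) : St2 A :=
  xSt b (u : A) * xSt (!b) (-((u⁻¹ : Aˣ) : A)) * xSt b (u : A)

/-- h_ij(u) = w_ij(u)w_ij(-1) in St(2,A). -/
def hSt {A : Type*} [CommRing A] (b : Bool) (u : Aˣ) : St2 A := wSt b u * wSt b (-1)

/-- The symbol c(u,v) = h₁₂(u)h₁₂(v)h₁₂(uv)⁻¹ in St(2,A). -/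
def symbolSt {A : Type*} [CommRing A] (u v : Aˣ) : St2 A :=
  hSt true u * hSt true v * (hSt true (u * v))⁻¹

/-- C(2,A): the subgroup of St(2,A) generated by the symbols c(u,v).  (Since the symbols
are central in St(2,A), this agrees with the normal closure of the set of symbols, which we
use here so that the quotient is a group.) -/
def C2 (A : Type*) [CommRing A] : Subgroup (St2 A) :=
  Subgroup.normalClosure {x | ∃ u v : Aˣ, x = symbolSt u v}

instance C2_normal (A : Type*) [CommRing A] : (C2 A).Normal :=
  Subgroup.normalClosure_normal

/-- The elementary matrix [[1,t],[0,1]] in SL₂. -/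
def E12SL {A : Type*} [CommRing A] (t : A) : Matrix.SpecialLinearGroup (Fin 2) A :=
  ⟨!![1, t; 0, 1], by simp [Matrix.det_fin_two_of]⟩

/-- The elementary matrix [[1,0],[t,1]] in SL₂. -/
def E21SL {A : Type*} [CommRing A] (t : A) : Matrix.SpecialLinearGroup (Fin 2) A :=
  ⟨!![1, 0; t, 1], by simp [Matrix.det_fin_two_of]⟩

/-- The image of the generators of St(2,A) in SL₂(A). -/
def stGen {A : Type*} [CommRing A] (p : Bool × A) : Matrix.SpecialLinearGroup (Fin 2) A :=
  cond p.1 (E12SL p.2) (E21SL p.2)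

def WSL {A : Type*} [CommRing A] (b : Bool) (u : Aˣ) : Matrix.SpecialLinearGroup (Fin 2) A :=
  if b then ⟨!![0, (u : A); -((u⁻¹ : Aˣ) : A), 0], by simp [Matrix.det_fin_two_of]⟩
  else ⟨!![0, -((u⁻¹ : Aˣ) : A); (u : A), 0], by simp [Matrix.det_fin_two_of]⟩

theorem stGen_w {A : Type*} [CommRing A] (b : Bool) (u : Aˣ) :
    stGen (b, (u : A)) * stGen (!b, -((u⁻¹ : Aˣ) : A)) * stGen (b, (u : A)) = WSL b u := by
  cases b <;>
  · simp only [stGen, cond_true, cond_false, Bool.not_true, Bool.not_false]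
    apply Subtype.ext
    show (_ * _) * _ = _
    ext i j
    fin_cases i <;> fin_cases j <;>
      simp [stGen, WSL, E12SL, E21SL, Matrix.mul_apply, Fin.sum_univ_two]

theorem stGen_add {A : Type*} [CommRing A] (b : Bool) (s t : A) :
    stGen (b, s) * stGen (b, t) = stGen (b, s + t) := by
  cases b <;>
  · simp only [stGen, cond_true, cond_false]
    apply Subtype.ext
    show _ * _ = _
    ext i j
    fin_cases i <;> fin_cases j <;>
      simp [stGen, E12SL, E21SL, Matrix.mul_apply, Fin.sum_univ_two, add_comm]

theorem WSL_rel {A : Type*} [CommRing A] (b : Bool) (u : Aˣ) (t : A) :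
    WSL b u * stGen (b, t) * WSL b (-u) = stGen (!b, -(((u⁻¹ : Aˣ) : A) ^ 2 * t)) := by
  cases b <;>
  · simp only [stGen, cond_true, cond_false, Bool.not_true, Bool.not_false]
    apply Subtype.ext
    show (_ * _) * _ = _
    ext i j
    fin_cases i <;> fin_cases j <;>
      simp [stGen, WSL, E12SL, E21SL, Matrix.mul_apply, Fin.sum_univ_two, inv_neg] <;>
      ring

theorem StRels_liftable {A : Type*} [CommRing A] :
    ∀ r ∈ StRels A, FreeGroup.lift (stGen (A := A)) r = 1 := by
  rintro r (⟨b, s, t, rfl⟩ | ⟨b, u, t, rfl⟩)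
  · rw [_root_.map_mul, _root_.map_mul, map_inv]
    simp only [xF, FreeGroup.lift_apply_of]
    rw [stGen_add, mul_inv_cancel]
  · rw [_root_.map_mul, _root_.map_mul, _root_.map_mul, map_inv]
    simp only [wFSt, xF, _root_.map_mul, FreeGroup.lift_apply_of]
    rw [stGen_w, stGen_w, WSL_rel, mul_inv_cancel]

/-- The homomorphism φ : St(2,A) → SL₂(A). -/
def phiSt (A : Type*) [CommRing A] : St2 A →* Matrix.SpecialLinearGroup (Fin 2) A :=
  PresentedGroup.toGroup StRels_liftable

@[simp] theorem phiSt_xSt {A : Type*} [CommRing A] (b : Bool) (t : A) :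
    phiSt A (xSt b t) = stGen (b, t) :=
  PresentedGroup.toGroup.of _


namespace Stmt18
variable {A : Type*} [CommRing A]

/-! ### Lemmas in Cohn's group C(A) -/

lemma C_mk_rel {r : FreeGroup A} (h : r ∈ CRels A) :
    PresentedGroup.mk (CRels A) r = 1 :=
  (QuotientGroup.eq_one_iff r).mpr (Subgroup.subset_normalClosure h)

lemma epsC_mk (a : A) : epsC a = PresentedGroup.mk (CRels A) (FreeGroup.of a) := rfl

lemma hC_mk (u : Aˣ) : hC u = PresentedGroup.mk (CRels A) (hFree u) := by
  simp only [hC, hFree, _root_.map_mul, epsC_mk]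

lemma hC_mul (u v : Aˣ) : hC u * hC v = hC (u * v) := by
  have h := C_mk_rel (A := A) (Or.inl (Or.inl ⟨u, v, rfl⟩))
  rwa [_root_.map_mul, _root_.map_mul, map_inv, ← hC_mk, ← hC_mk, ← hC_mk, mul_inv_eq_one] at h

lemma C_rel2 (a b : A) : epsC a * epsC (0:A) * epsC b = hC (-1) * epsC (a + b) := by
  have h := C_mk_rel (A := A) (Or.inl (Or.inr ⟨a, b, rfl⟩))
  rwa [_root_.map_mul, _root_.map_mul, _root_.map_mul, map_inv, _root_.map_mul, ← epsC_mk, ← epsC_mk, ← epsC_mk,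
    ← epsC_mk, ← hC_mk, mul_inv_eq_one] at h

lemma C_rel3 (u : Aˣ) (a : A) : hC u * epsC a * hC u = epsC ((u:A)^2 * a) := by
  have h := C_mk_rel (A := A) (Or.inr ⟨u, a, rfl⟩)
  rwa [_root_.map_mul, _root_.map_mul, _root_.map_mul, map_inv, ← epsC_mk, ← epsC_mk, ← hC_mk,
    mul_inv_eq_one] at h

lemma hC_one : hC (1 : Aˣ) = 1 := by
  have h := hC_mul (1 : Aˣ) 1
  rw [mul_one] at h
  exact mul_eq_right.mp h

lemma hC_inv (u : Aˣ) : (hC u)⁻¹ = hC u⁻¹ :=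
  (eq_inv_of_mul_eq_one_left (by rw [hC_mul, inv_mul_cancel, hC_one])).symm

lemma hC_neg_one : hC (-1 : Aˣ) = epsC (0:A) * epsC (0:A) := by
  have h := C_rel2 (0:A) 0
  rw [add_zero] at h
  exact (mul_right_cancel h).symm

lemma hC_neg_one_sq : hC (-1 : Aˣ) * hC (-1 : Aˣ) = 1 := by
  rw [hC_mul]; norm_num; exact hC_one

lemma hC_neg_one_central (a : A) : Commute (hC (-1 : Aˣ)) (epsC a) := by
  have h1 : hC (-1 : Aˣ) * epsC a * hC (-1 : Aˣ) = epsC a := by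
    rw [C_rel3]; norm_num
  show hC (-1:Aˣ) * epsC a = epsC a * hC (-1:Aˣ)
  calc hC (-1:Aˣ) * epsC a
      = (hC (-1:Aˣ) * epsC a * hC (-1:Aˣ)) * hC (-1:Aˣ) := by
        rw [mul_assoc (hC (-1:Aˣ) * epsC a), hC_neg_one_sq, mul_one]
    _ = epsC a * hC (-1:Aˣ) := by rw [h1]

lemma q_sq_central (a : A) : Commute (epsC (0:A) * epsC (0:A)) (epsC a) := by
  simp only [← hC_neg_one]; exact hC_neg_one_central a

lemma q_pow_four : (epsC (0:A) * epsC (0:A)) * (epsC (0:A) * epsC (0:A)) = 1 := by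
  rw [← hC_neg_one, hC_neg_one_sq]

lemma heps (u : Aˣ) (a : A) : hC u * epsC a = epsC ((u:A)^2 * a) * (hC u)⁻¹ := by
  rw [eq_mul_inv_iff_mul_eq, C_rel3]

lemma hinv_eps (u : Aˣ) (a : A) :
    (hC u)⁻¹ * epsC a = epsC (((u⁻¹:Aˣ):A)^2 * a) * hC u := by
  have h := heps u⁻¹ a
  rwa [hC_inv, ← hC_inv, inv_inv] at h

lemma hq (u : Aˣ) : hC u * epsC (0:A) = epsC (0:A) * (hC u)⁻¹ := by
  have h := heps u (0:A)
  rwa [mul_zero] at h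

lemma hqinv (u : Aˣ) : hC u * (epsC (0:A))⁻¹ = (epsC (0:A))⁻¹ * (hC u)⁻¹ := by
  have h := congrArg (·⁻¹) (hq u)
  simpa [_root_.mul_inv_rev] using h.symm

lemma eps_qinv_eps (a b : A) :
    epsC a * (epsC (0:A))⁻¹ * epsC b = epsC (a + b) := by
  have hcomm : (epsC (0:A) * epsC (0:A))⁻¹ * epsC b
      = epsC b * (epsC (0:A) * epsC (0:A))⁻¹ := (q_sq_central b).inv_left.eq
  calc epsC a * (epsC (0:A))⁻¹ * epsC b
      = epsC a * epsC (0:A) * ((epsC (0:A) * epsC (0:A))⁻¹ * epsC b) := by group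
    _ = epsC a * epsC (0:A) * (epsC b * (epsC (0:A) * epsC (0:A))⁻¹) := by rw [hcomm]
    _ = (epsC a * epsC (0:A) * epsC b) * (epsC (0:A) * epsC (0:A))⁻¹ := by group
    _ = hC (-1) * epsC (a+b) * (epsC (0:A) * epsC (0:A))⁻¹ := by rw [C_rel2]
    _ = epsC (a+b) := by
        rw [hC_neg_one, (q_sq_central (a+b)).eq]; group


lemma q_sq_comm_hC (w : Aˣ) :
    Commute (epsC (0:A) * epsC (0:A)) (hC w) :=
  ((q_sq_central _).mul_right (q_sq_central _)).mul_right (q_sq_central _)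

lemma hC_neg_coe (u : Aˣ) :
    hC (-u) = epsC (u:A) * epsC ((u⁻¹:Aˣ):A) * epsC (u:A) := by
  simp [hC]

/-- The images of the Steinberg generators in C(A). -/
def dgen : Bool × A → CGroup A :=
  fun p => cond p.1 (epsC (-p.2) * (epsC (0:A))⁻¹) ((epsC (0:A))⁻¹ * epsC p.2)

lemma dgen_true (t : A) : dgen (true, t) = epsC (-t) * (epsC (0:A))⁻¹ := rfl
lemma dgen_false (t : A) : dgen (false, t) = (epsC (0:A))⁻¹ * epsC t := rfl

lemma dgen_add (b : Bool) (s t : A) : dgen (b, s) * dgen (b, t) = dgen (b, s + t) := by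
  cases b
  · rw [dgen_false, dgen_false, dgen_false]
    calc (epsC (0:A))⁻¹ * epsC s * ((epsC (0:A))⁻¹ * epsC t)
        = (epsC (0:A))⁻¹ * (epsC s * (epsC (0:A))⁻¹ * epsC t) := by group
      _ = (epsC (0:A))⁻¹ * epsC (s + t) := by rw [eps_qinv_eps]
  · rw [dgen_true, dgen_true, dgen_true]
    calc epsC (-s) * (epsC (0:A))⁻¹ * (epsC (-t) * (epsC (0:A))⁻¹)
        = (epsC (-s) * (epsC (0:A))⁻¹ * epsC (-t)) * (epsC (0:A))⁻¹ := by group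
      _ = epsC (-(s+t)) * (epsC (0:A))⁻¹ := by rw [eps_qinv_eps, neg_add]

lemma q_cube_inv : (epsC (0:A))⁻¹ * (epsC (0:A) * epsC (0:A))⁻¹ = epsC (0:A) := by
  have h4 := q_pow_four (A := A)
  calc (epsC (0:A))⁻¹ * (epsC (0:A) * epsC (0:A))⁻¹
      = ((epsC (0:A) * epsC (0:A)) * epsC (0:A))⁻¹ *
          ((epsC (0:A) * epsC (0:A)) * (epsC (0:A) * epsC (0:A))) := by rw [h4]; group
    _ = epsC (0:A) := by group

lemma q_cube (a : A) : epsC (0:A) * ((epsC (0:A) * epsC (0:A)) * epsC a)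
    = (epsC (0:A))⁻¹ * epsC a := by
  have h4 := q_pow_four (A := A)
  calc epsC (0:A) * ((epsC (0:A) * epsC (0:A)) * epsC a)
      = ((epsC (0:A) * epsC (0:A)) * (epsC (0:A) * epsC (0:A))) *
          ((epsC (0:A))⁻¹ * epsC a) := by group
    _ = (epsC (0:A))⁻¹ * epsC a := by rw [h4, one_mul]

lemma q_sq_central_all (g : CGroup A) :
    (epsC (0:A) * epsC (0:A)) * g = g * (epsC (0:A) * epsC (0:A)) := by
  have hg := PresentedGroup.generated_by (CRels A)
    (Subgroup.centralizer {epsC (0:A) * epsC (0:A)})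
    (fun a => Subgroup.mem_centralizer_iff.mpr (by
      intro h hh
      rw [Set.mem_singleton_iff] at hh
      subst hh
      exact (q_sq_central a).eq)) g
  exact Subgroup.mem_centralizer_iff.mp hg _ rfl

lemma q_sq_central_inv (g : CGroup A) :
    (epsC (0:A) * epsC (0:A))⁻¹ * g = g * (epsC (0:A) * epsC (0:A))⁻¹ :=
  ((show Commute (epsC (0:A) * epsC (0:A)) g from q_sq_central_all g).inv_left).eq

lemma Wfalse (u : Aˣ) :
    dgen (false, (u:A)) * dgen (true, -((u⁻¹:Aˣ):A)) * dgen (false, (u:A))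
      = epsC (0:A) * hC (-u) := by
  simp only [dgen_false, dgen_true, neg_neg]
  rw [hC_neg_coe]
  calc (epsC (0:A))⁻¹ * epsC (u:A) * (epsC ((u⁻¹:Aˣ):A) * (epsC (0:A))⁻¹) *
        ((epsC (0:A))⁻¹ * epsC (u:A))
      = (epsC (0:A))⁻¹ * (epsC (u:A) * epsC ((u⁻¹:Aˣ):A)) *
          ((epsC (0:A) * epsC (0:A))⁻¹ * epsC (u:A)) := by group
    _ = (epsC (0:A))⁻¹ * (epsC (u:A) * epsC ((u⁻¹:Aˣ):A)) *
          (epsC (u:A) * (epsC (0:A) * epsC (0:A))⁻¹) := by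
        rw [q_sq_central_inv (epsC (u:A))]
    _ = (epsC (0:A))⁻¹ * ((epsC (u:A) * epsC ((u⁻¹:Aˣ):A) * epsC (u:A)) *
          (epsC (0:A) * epsC (0:A))⁻¹) := by group
    _ = (epsC (0:A))⁻¹ * ((epsC (0:A) * epsC (0:A))⁻¹ *
          (epsC (u:A) * epsC ((u⁻¹:Aˣ):A) * epsC (u:A))) := by
        rw [q_sq_central_inv (epsC (u:A) * epsC ((u⁻¹:Aˣ):A) * epsC (u:A))]
    _ = ((epsC (0:A))⁻¹ * (epsC (0:A) * epsC (0:A))⁻¹) *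
          (epsC (u:A) * epsC ((u⁻¹:Aˣ):A) * epsC (u:A)) := by group
    _ = epsC (0:A) * (epsC (u:A) * epsC ((u⁻¹:Aˣ):A) * epsC (u:A)) := by
        rw [q_cube_inv]

lemma Wtrue (u : Aˣ) :
    dgen (true, (u:A)) * dgen (false, -((u⁻¹:Aˣ):A)) * dgen (true, (u:A))
      = epsC (0:A) * hC u⁻¹ := by
  simp only [dgen_true, dgen_false]
  calc epsC (-(u:A)) * (epsC (0:A))⁻¹ * ((epsC (0:A))⁻¹ * epsC (-((u⁻¹:Aˣ):A))) *
        (epsC (-(u:A)) * (epsC (0:A))⁻¹)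
      = epsC (-(u:A)) * ((epsC (0:A) * epsC (0:A))⁻¹ *
          (epsC (-((u⁻¹:Aˣ):A)) * epsC (-(u:A)))) * (epsC (0:A))⁻¹ := by group
    _ = epsC (-(u:A)) * ((epsC (-((u⁻¹:Aˣ):A)) * epsC (-(u:A))) *
          (epsC (0:A) * epsC (0:A))⁻¹) * (epsC (0:A))⁻¹ := by
        rw [q_sq_central_inv (epsC (-((u⁻¹:Aˣ):A)) * epsC (-(u:A)))]
    _ = hC u * ((epsC (0:A) * epsC (0:A))⁻¹ * (epsC (0:A))⁻¹) := by rw [hC]; group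
    _ = hC u * ((epsC (0:A))⁻¹ * (epsC (0:A) * epsC (0:A))⁻¹) := by group
    _ = hC u * epsC (0:A) := by rw [q_cube_inv]
    _ = epsC (0:A) * (hC u)⁻¹ := hq u
    _ = epsC (0:A) * hC u⁻¹ := by rw [hC_inv]


lemma q_cube' : epsC (0:A) * (epsC (0:A) * epsC (0:A)) = (epsC (0:A))⁻¹ := by
  have h4 := q_pow_four (A := A)
  calc epsC (0:A) * (epsC (0:A) * epsC (0:A))
      = (epsC (0:A))⁻¹ * ((epsC (0:A) * epsC (0:A)) * (epsC (0:A) * epsC (0:A))) := by group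
    _ = (epsC (0:A))⁻¹ := by rw [h4, mul_one]

lemma coe_neg_inv_sq (u : Aˣ) : ((((-u)⁻¹:Aˣ)):A)^2 = (((u⁻¹:Aˣ)):A)^2 := by
  simp [inv_neg]

lemma neg_inv_mul_self (u : Aˣ) : (-u)⁻¹ * u = -1 := by
  simp [inv_neg]

lemma mul_neg_inv_self (u : Aˣ) : u * (-u)⁻¹ = -1 := by
  simp [inv_neg]

lemma key_false (u : Aˣ) (t : A) :
    (epsC (0:A) * hC (-u)) * dgen (false, t) * (epsC (0:A) * hC u)
      = dgen (true, -((((u⁻¹:Aˣ)):A)^2 * t)) := by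
  rw [dgen_false, dgen_true, neg_neg]
  calc epsC (0:A) * hC (-u) * ((epsC (0:A))⁻¹ * epsC t) * (epsC (0:A) * hC u)
      = epsC (0:A) * (hC (-u) * (epsC (0:A))⁻¹) * epsC t * (epsC (0:A) * hC u) := by
        group
    _ = epsC (0:A) * ((epsC (0:A))⁻¹ * (hC (-u))⁻¹) * epsC t * (epsC (0:A) * hC u) := by
        rw [hqinv (-u)]
    _ = (hC (-u))⁻¹ * epsC t * (epsC (0:A) * hC u) := by group
    _ = epsC (((((-u)⁻¹:Aˣ)):A)^2 * t) * hC (-u) * (epsC (0:A) * hC u) := by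
        rw [hinv_eps (-u) t]
    _ = epsC (((((u)⁻¹:Aˣ)):A)^2 * t) * ((hC (-u) * epsC (0:A)) * hC u) := by
        rw [coe_neg_inv_sq]; group
    _ = epsC (((((u)⁻¹:Aˣ)):A)^2 * t) * ((epsC (0:A) * (hC (-u))⁻¹) * hC u) := by
        rw [hq (-u)]
    _ = epsC (((((u)⁻¹:Aˣ)):A)^2 * t) * (epsC (0:A) * ((hC (-u))⁻¹ * hC u)) := by
        group
    _ = epsC (((((u)⁻¹:Aˣ)):A)^2 * t) * (epsC (0:A) * hC (-1)) := by
        rw [hC_inv, hC_mul, neg_inv_mul_self]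
    _ = epsC (((((u)⁻¹:Aˣ)):A)^2 * t) * (epsC (0:A) * (epsC (0:A) * epsC (0:A))) := by
        rw [hC_neg_one]
    _ = epsC (((((u)⁻¹:Aˣ)):A)^2 * t) * (epsC (0:A))⁻¹ := by rw [q_cube']

lemma key_true (u : Aˣ) (t : A) :
    (epsC (0:A) * hC u⁻¹) * dgen (true, t) * (epsC (0:A) * hC (-u)⁻¹)
      = dgen (false, -((((u⁻¹:Aˣ)):A)^2 * t)) := by
  rw [dgen_true, dgen_false]
  calc epsC (0:A) * hC u⁻¹ * (epsC (-t) * (epsC (0:A))⁻¹) * (epsC (0:A) * hC (-u)⁻¹)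
      = epsC (0:A) * ((hC u⁻¹ * epsC (-t)) * hC (-u)⁻¹) := by group
    _ = epsC (0:A) * ((epsC ((((u⁻¹:Aˣ)):A)^2 * (-t)) * (hC u⁻¹)⁻¹) * hC (-u)⁻¹) := by
        rw [heps u⁻¹ (-t)]
    _ = epsC (0:A) * (epsC ((((u⁻¹:Aˣ)):A)^2 * (-t)) * ((hC u⁻¹)⁻¹ * hC (-u)⁻¹)) := by
        group
    _ = epsC (0:A) * (epsC ((((u⁻¹:Aˣ)):A)^2 * (-t)) * (epsC (0:A) * epsC (0:A))) := by
        rw [hC_inv, inv_inv, hC_mul, mul_neg_inv_self, hC_neg_one]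
    _ = epsC (0:A) * ((epsC (0:A) * epsC (0:A)) * epsC ((((u⁻¹:Aˣ)):A)^2 * (-t))) := by
        rw [q_sq_central_all (epsC ((((u⁻¹:Aˣ)):A)^2 * (-t)))]
    _ = (epsC (0:A) * (epsC (0:A) * epsC (0:A))) * epsC ((((u⁻¹:Aˣ)):A)^2 * (-t)) := by
        group
    _ = (epsC (0:A))⁻¹ * epsC (-((((u⁻¹:Aˣ)):A)^2 * t)) := by rw [q_cube', mul_neg]

lemma delta_rels : ∀ r ∈ StRels A, FreeGroup.lift (dgen (A := A)) r = 1 := by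
  rintro r (⟨b, s, t, rfl⟩ | ⟨b, u, t, rfl⟩)
  · simp only [xF, _root_.map_mul, map_inv, FreeGroup.lift_apply_of]
    rw [dgen_add, mul_inv_cancel]
  · simp only [wFSt, xF, _root_.map_mul, map_inv, FreeGroup.lift_apply_of, Bool.not_false,
      Bool.not_true]
    rw [mul_inv_eq_one]
    cases b
    · calc dgen (false, (u:A)) * dgen (true, -((u⁻¹:Aˣ):A)) * dgen (false, (u:A)) *
            dgen (false, t) *
            (dgen (false, ((-u:Aˣ):A)) * dgen (true, -(((-u)⁻¹:Aˣ):A)) *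
              dgen (false, ((-u:Aˣ):A)))
          = (dgen (false, (u:A)) * dgen (true, -((u⁻¹:Aˣ):A)) * dgen (false, (u:A))) *
            dgen (false, t) *
            (dgen (false, ((-u:Aˣ):A)) * dgen (true, -(((-u)⁻¹:Aˣ):A)) *
              dgen (false, ((-u:Aˣ):A))) := by group
        _ = (epsC (0:A) * hC (-u)) * dgen (false, t) * (epsC (0:A) * hC (-(-u))) := by
            rw [Wfalse u, Wfalse (-u)]
        _ = dgen (true, -((((u⁻¹:Aˣ)):A)^2 * t)) := by rw [neg_neg]; exact key_false u t
    · calc dgen (true, (u:A)) * dgen (false, -((u⁻¹:Aˣ):A)) * dgen (true, (u:A)) *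
            dgen (true, t) *
            (dgen (true, ((-u:Aˣ):A)) * dgen (false, -(((-u)⁻¹:Aˣ):A)) *
              dgen (true, ((-u:Aˣ):A)))
          = (dgen (true, (u:A)) * dgen (false, -((u⁻¹:Aˣ):A)) * dgen (true, (u:A))) *
            dgen (true, t) *
            (dgen (true, ((-u:Aˣ):A)) * dgen (false, -(((-u)⁻¹:Aˣ):A)) *
              dgen (true, ((-u:Aˣ):A))) := by group
        _ = (epsC (0:A) * hC u⁻¹) * dgen (true, t) * (epsC (0:A) * hC (-u)⁻¹) := by
            rw [Wtrue u, Wtrue (-u)]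
        _ = dgen (false, -((((u⁻¹:Aˣ)):A)^2 * t)) := key_true u t

/-- The homomorphism δ : St(2,A) → C(A). -/
def deltaHom : St2 A →* CGroup A := PresentedGroup.toGroup delta_rels

@[simp] lemma delta_x (b : Bool) (t : A) : deltaHom (xSt b t) = dgen (b, t) :=
  PresentedGroup.toGroup.of delta_rels


lemma neg_one_inv : ((-1 : Aˣ))⁻¹ = -1 := by simp [inv_neg]

lemma delta_w_false (u : Aˣ) : deltaHom (wSt false u) = epsC (0:A) * hC (-u) := by
  simp only [wSt, _root_.map_mul, delta_x]
  exact Wfalse u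

lemma delta_w_true (u : Aˣ) : deltaHom (wSt true u) = epsC (0:A) * hC u⁻¹ := by
  simp only [wSt, _root_.map_mul, delta_x]
  exact Wtrue u

lemma delta_h_true (u : Aˣ) :
    deltaHom (hSt true u) = (epsC (0:A) * epsC (0:A)) * hC (-u) := by
  simp only [hSt, _root_.map_mul, delta_w_true, neg_one_inv]
  calc epsC (0:A) * hC u⁻¹ * (epsC (0:A) * hC (-1))
      = epsC (0:A) * ((hC u⁻¹ * epsC (0:A)) * hC (-1)) := by group
    _ = epsC (0:A) * ((epsC (0:A) * (hC u⁻¹)⁻¹) * hC (-1)) := by rw [hq u⁻¹]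
    _ = (epsC (0:A) * epsC (0:A)) * ((hC u⁻¹)⁻¹ * hC (-1)) := by group
    _ = (epsC (0:A) * epsC (0:A)) * (hC u * hC (-1)) := by rw [hC_inv, inv_inv]
    _ = (epsC (0:A) * epsC (0:A)) * hC (-u) := by rw [hC_mul, mul_neg_one]

lemma delta_symbol (u v : Aˣ) : deltaHom (symbolSt u v) = 1 := by
  simp only [symbolSt, _root_.map_mul, map_inv, delta_h_true]
  calc (epsC (0:A) * epsC (0:A)) * hC (-u) * ((epsC (0:A) * epsC (0:A)) * hC (-v)) *
        ((epsC (0:A) * epsC (0:A)) * hC (-(u*v)))⁻¹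
      = (epsC (0:A) * epsC (0:A)) *
          (hC (-u) * ((epsC (0:A) * epsC (0:A)) * (hC (-v) * (hC (-(u*v)))⁻¹))) *
          (epsC (0:A) * epsC (0:A))⁻¹ := by group
    _ = (epsC (0:A) * epsC (0:A)) *
          (hC (-u) * ((hC (-v) * (hC (-(u*v)))⁻¹) * (epsC (0:A) * epsC (0:A)))) *
          (epsC (0:A) * epsC (0:A))⁻¹ := by
        rw [q_sq_central_all (hC (-v) * (hC (-(u*v)))⁻¹)]
    _ = (epsC (0:A) * epsC (0:A)) * ((hC (-u) * hC (-v)) * (hC (-(u*v)))⁻¹) := by group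
    _ = (epsC (0:A) * epsC (0:A)) * (hC (u*v) * (hC (-(u*v)))⁻¹) := by
        rw [hC_mul, neg_mul_neg]
    _ = (epsC (0:A) * epsC (0:A)) * hC (-1) := by
        rw [hC_inv, hC_mul, mul_neg_inv_self]
    _ = 1 := by rw [hC_neg_one, q_pow_four]

lemma C2_le_ker_delta : C2 A ≤ (deltaHom (A := A)).ker := by
  apply Subgroup.normalClosure_le_normal
  rintro x ⟨u, v, rfl⟩
  exact MonoidHom.mem_ker.mpr (delta_symbol u v)

/-- δ̄ : St(2,A)/C(2,A) → C(A). -/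
def deltaBar : St2 A ⧸ C2 A →* CGroup A :=
  QuotientGroup.lift (C2 A) deltaHom C2_le_ker_delta

/-! ### Lemmas in the Steinberg group St(2,A) -/

lemma St_mk_rel {r : FreeGroup (Bool × A)} (h : r ∈ StRels A) :
    PresentedGroup.mk (StRels A) r = 1 :=
  (QuotientGroup.eq_one_iff r).mpr (Subgroup.subset_normalClosure h)

lemma xSt_mk (b : Bool) (t : A) : xSt b t = PresentedGroup.mk (StRels A) (xF b t) := rfl

lemma wSt_mk (b : Bool) (u : Aˣ) : wSt b u = PresentedGroup.mk (StRels A) (wFSt b u) := by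
  simp only [wSt, wFSt, _root_.map_mul, xSt_mk]

lemma xSt_add (b : Bool) (s t : A) : xSt b s * xSt b t = xSt b (s + t) := by
  have h := St_mk_rel (A := A) (Or.inl ⟨b, s, t, rfl⟩)
  rwa [_root_.map_mul, _root_.map_mul, map_inv, ← xSt_mk, ← xSt_mk, ← xSt_mk,
    mul_inv_eq_one] at h

lemma xSt_zero (b : Bool) : xSt b (0:A) = 1 := by
  have h := xSt_add b (0:A) 0
  rw [add_zero] at h
  exact mul_eq_right.mp h

lemma xSt_inv (b : Bool) (t : A) : (xSt b t)⁻¹ = xSt b (-t) := by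
  have h : xSt b t * xSt b (-t) = 1 := by rw [xSt_add, add_neg_cancel, xSt_zero]
  exact inv_eq_of_mul_eq_one_right h

lemma wSt_rel (b : Bool) (u : Aˣ) (t : A) :
    wSt b u * xSt b t * wSt b (-u) = xSt (!b) (-(((u⁻¹:Aˣ):A)^2 * t)) := by
  have h := St_mk_rel (A := A) (Or.inr ⟨b, u, t, rfl⟩)
  rwa [_root_.map_mul, _root_.map_mul, _root_.map_mul, map_inv, ← wSt_mk, ← wSt_mk,
    ← xSt_mk, ← xSt_mk, mul_inv_eq_one] at h


lemma comm_of_conj {G : Type*} [Group G] {a x y : G} (h : a * x * a⁻¹ = y) :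
    a * x = y * a := by rw [← h]; group

lemma wSt_mul_neg (b : Bool) (u : Aˣ) : wSt b u * wSt b (-u) = 1 := by
  simp only [wSt, Units.val_neg, inv_neg, neg_neg]
  calc xSt b (u:A) * xSt (!b) (-((u⁻¹:Aˣ):A)) * xSt b (u:A) *
        (xSt b (-(u:A)) * xSt (!b) ((u⁻¹:Aˣ):A) * xSt b (-(u:A)))
      = xSt b (u:A) * xSt (!b) (-((u⁻¹:Aˣ):A)) *
          ((xSt b (u:A) * xSt b (-(u:A))) * xSt (!b) ((u⁻¹:Aˣ):A)) *
          xSt b (-(u:A)) := by group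
    _ = xSt b (u:A) * ((xSt (!b) (-((u⁻¹:Aˣ):A)) * xSt (!b) ((u⁻¹:Aˣ):A)) *
          xSt b (-(u:A))) := by rw [xSt_add, add_neg_cancel, xSt_zero, one_mul]; group
    _ = xSt b (u:A) * xSt b (-(u:A)) := by
        rw [xSt_add, neg_add_cancel, xSt_zero, one_mul]
    _ = 1 := by rw [xSt_add, add_neg_cancel, xSt_zero]

lemma wSt_inv (b : Bool) (u : Aˣ) : (wSt b u)⁻¹ = wSt b (-u) :=
  inv_eq_of_mul_eq_one_right (wSt_mul_neg b u)

lemma w_mul_x (b : Bool) (u : Aˣ) (t : A) :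
    wSt b u * xSt b t = xSt (!b) (-(((u⁻¹:Aˣ):A))^2 * t) * wSt b u := by
  have h := wSt_rel b u t
  rw [← wSt_inv, mul_inv_eq_iff_eq_mul] at h
  rw [h]
  ring_nf

lemma wSt_flip (b : Bool) (u : Aˣ) : wSt b u = wSt (!b) (-u⁻¹) := by
  have hcoe : (-(((u⁻¹:Aˣ):A)^2)) * (-(u:A)) = ((u⁻¹:Aˣ):A) := by
    have h0 : ((u⁻¹:Aˣ):A) * (u:A) = 1 := Units.inv_mul u
    calc (-(((u⁻¹:Aˣ):A)^2)) * (-(u:A)) = ((u⁻¹:Aˣ):A) * (((u⁻¹:Aˣ):A) * (u:A)) := by ring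
      _ = ((u⁻¹:Aˣ):A) := by rw [h0, mul_one]
  have h := w_mul_x b u (-(u:A))
  rw [hcoe] at h
  have h2 : wSt b u * xSt b (-(u:A)) = xSt b (u:A) * xSt (!b) (-((u⁻¹:Aˣ):A)) := by
    rw [wSt]
    calc xSt b (u:A) * xSt (!b) (-((u⁻¹:Aˣ):A)) * xSt b (u:A) * xSt b (-(u:A))
        = xSt b (u:A) * xSt (!b) (-((u⁻¹:Aˣ):A)) * (xSt b (u:A) * xSt b (-(u:A))) := by
          group
      _ = xSt b (u:A) * xSt (!b) (-((u⁻¹:Aˣ):A)) := by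
          rw [xSt_add, add_neg_cancel, xSt_zero, mul_one]
  rw [h2] at h
  have h3 : (xSt (!b) ((u⁻¹:Aˣ):A))⁻¹ * (xSt b (u:A) * xSt (!b) (-((u⁻¹:Aˣ):A)))
      = wSt b u := by rw [h]; group
  rw [xSt_inv] at h3
  rw [← h3]
  simp only [wSt, Units.val_neg, inv_neg, neg_neg, inv_inv, Bool.not_not]
  group

lemma w_conj_other (b : Bool) (u : Aˣ) (t : A) :
    wSt b u * xSt (!b) t * wSt b (-u) = xSt b (-((u:A)^2 * t)) := by
  have h := wSt_rel (!b) (-u⁻¹) t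
  simp only [inv_neg, inv_inv, neg_neg, Units.val_neg, Bool.not_not, neg_sq] at h
  rw [wSt_flip b u, wSt_flip b (-u)]
  simp only [inv_neg, neg_neg]
  exact h

lemma hSt_inv (b : Bool) (u : Aˣ) : (hSt b u)⁻¹ = wSt b 1 * wSt b (-u) := by
  rw [hSt, _root_.mul_inv_rev, wSt_inv, wSt_inv, neg_neg]

lemma h_conj_same (b : Bool) (u : Aˣ) (t : A) :
    hSt b u * xSt b t * (hSt b u)⁻¹ = xSt b ((u:A)^2 * t) := by
  have h1 := wSt_rel b (-1) t
  simp only [inv_neg, inv_one, Units.val_neg, Units.val_one, neg_one_sq, one_mul] at h1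
  rw [neg_neg] at h1
  have h2 := w_conj_other b u (-t)
  rw [mul_neg, neg_neg] at h2
  rw [hSt_inv, hSt]
  calc wSt b u * wSt b (-1) * xSt b t * (wSt b 1 * wSt b (-u))
      = wSt b u * (wSt b (-1) * xSt b t * wSt b 1) * wSt b (-u) := by group
    _ = wSt b u * xSt (!b) (-t) * wSt b (-u) := by rw [h1]
    _ = xSt b ((u:A)^2 * t) := h2

lemma h_conj_other (b : Bool) (u : Aˣ) (t : A) :
    hSt b u * xSt (!b) t * (hSt b u)⁻¹ = xSt (!b) (((u⁻¹:Aˣ):A)^2 * t) := by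
  have h1 := w_conj_other b (-1) t
  simp only [Units.val_neg, Units.val_one, neg_one_sq, one_mul, neg_neg] at h1
  have h2 := wSt_rel b u (-t)
  rw [mul_neg, neg_neg] at h2
  rw [hSt_inv, hSt]
  calc wSt b u * wSt b (-1) * xSt (!b) t * (wSt b 1 * wSt b (-u))
      = wSt b u * (wSt b (-1) * xSt (!b) t * wSt b 1) * wSt b (-u) := by group
    _ = wSt b u * xSt b (-t) * wSt b (-u) := by rw [h1]
    _ = xSt (!b) (((u⁻¹:Aˣ):A)^2 * t) := h2

lemma h_neg_one_comm (b c : Bool) (t : A) :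
    hSt b (-1) * xSt c t = xSt c t * hSt b (-1) := by
  have hsame : ∀ t' : A, hSt b (-1) * xSt b t' = xSt b t' * hSt b (-1) := by
    intro t'
    have h := h_conj_same b (-1) t'
    simp only [Units.val_neg, Units.val_one, neg_one_sq, one_mul] at h
    exact comm_of_conj h
  have hother : ∀ t' : A, hSt b (-1) * xSt (!b) t' = xSt (!b) t' * hSt b (-1) := by
    intro t'
    have h := h_conj_other b (-1) t'
    simp only [inv_neg, inv_one, Units.val_neg, Units.val_one, neg_one_sq, one_mul] at h
    exact comm_of_conj h
  cases b <;> cases c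
  · exact hsame t
  · exact hother t
  · exact hother t
  · exact hsame t

lemma zeta_central (g : St2 A) : hSt true (-1) * g = g * hSt true (-1) := by
  have hg := PresentedGroup.generated_by (StRels A)
    (Subgroup.centralizer {hSt true (-1)})
    (fun j => Subgroup.mem_centralizer_iff.mpr (by
      intro h hh
      rw [Set.mem_singleton_iff] at hh
      subst hh
      exact h_neg_one_comm true j.1 j.2)) g
  exact Subgroup.mem_centralizer_iff.mp hg _ rfl

/-- ω = w₂₁(-1). -/
def omSt : St2 A := wSt false (-1)

lemma om_inv : (omSt (A := A))⁻¹ = wSt false 1 := by rw [omSt, wSt_inv, neg_neg]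

lemma om_mul_x (t : A) : omSt * xSt false t = xSt true (-t) * omSt := by
  have h := w_mul_x false (-1) t
  simp only [inv_neg, inv_one, Units.val_neg, Units.val_one, neg_one_sq, one_mul,
    neg_one_mul, Bool.not_false] at h
  exact h

lemma om_conj_x_false (t : A) : omSt * xSt false t * (omSt (A := A))⁻¹ = xSt true (-t) := by
  rw [om_mul_x]; group

lemma om_conj_x_true (t : A) : omSt * xSt true t * (omSt (A := A))⁻¹ = xSt false (-t) := by
  have h := w_conj_other false (-1) t
  simp only [Units.val_neg, Units.val_one, neg_one_sq, one_mul, neg_neg,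
    Bool.not_false] at h
  rw [om_inv, omSt]
  exact h

lemma om_conj_w_true (v : Aˣ) :
    omSt * wSt true v * (omSt (A := A))⁻¹ = wSt true v⁻¹ := by
  have e1 : wSt true v = xSt true (v:A) * xSt false (-((v⁻¹:Aˣ):A)) * xSt true (v:A) := rfl
  rw [e1]
  calc omSt * (xSt true (v:A) * xSt false (-((v⁻¹:Aˣ):A)) * xSt true (v:A)) * omSt⁻¹
      = (omSt * xSt true (v:A) * omSt⁻¹) * (omSt * xSt false (-((v⁻¹:Aˣ):A)) * omSt⁻¹) *
          (omSt * xSt true (v:A) * omSt⁻¹) := by group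
    _ = xSt false (-(v:A)) * xSt true ((v⁻¹:Aˣ):A) * xSt false (-(v:A)) := by
        rw [om_conj_x_true, om_conj_x_false, neg_neg]
    _ = wSt false (-v) := by
        simp only [wSt, Units.val_neg, inv_neg, neg_neg, Bool.not_false]
    _ = wSt true v⁻¹ := by
        rw [wSt_flip false (-v)]
        simp only [inv_neg, neg_neg, Bool.not_false]

lemma om_conj_h_true (v : Aˣ) :
    omSt * hSt true v * (omSt (A := A))⁻¹ = hSt true v⁻¹ := by
  rw [hSt, hSt]
  calc omSt * (wSt true v * wSt true (-1)) * omSt⁻¹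
      = (omSt * wSt true v * omSt⁻¹) * (omSt * wSt true (-1) * omSt⁻¹) := by group
    _ = wSt true v⁻¹ * wSt true (-1) := by rw [om_conj_w_true, om_conj_w_true, neg_one_inv]

lemma om_flip : omSt (A := A) = wSt true 1 := by
  rw [omSt, wSt_flip false (-1)]
  simp only [inv_neg, inv_one, neg_neg, Bool.not_false]

lemma h_true_one : hSt true (1:Aˣ) = 1 := by
  rw [hSt]; exact wSt_mul_neg true 1

lemma zeta_eq : hSt true (-1 : Aˣ) = (omSt (A := A))⁻¹ * (omSt (A := A))⁻¹ := by
  have h : wSt true (-1 : Aˣ) = (omSt (A := A))⁻¹ := by rw [om_flip, wSt_inv]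
  rw [hSt, h]


/-- e(a) = ω·x₂₁(a). -/
def eSt (a : A) : St2 A := omSt * xSt false a

lemma om_sq_eq : omSt (A := A) * omSt = (hSt true (-1:Aˣ))⁻¹ := by
  rw [zeta_eq, _root_.mul_inv_rev, inv_inv]

lemma om_sq_central (g : St2 A) : (omSt * omSt) * g = g * (omSt * omSt) := by
  have h : Commute (hSt true (-1:Aˣ)) g := zeta_central g
  have h2 := (h.inv_left).eq
  rw [← om_sq_eq] at h2
  exact h2

lemma w_true_hom (v : Aˣ) : wSt true v = hSt true v * omSt := by
  rw [hSt, om_flip, mul_assoc]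
  have h : wSt true (-1:Aˣ) * wSt true 1 = 1 := by
    have h0 := wSt_mul_neg true (-1:Aˣ)
    rwa [neg_neg] at h0
  rw [h, mul_one]

lemma H_eq (u : Aˣ) :
    eSt (-(u:A)) * eSt (-((u⁻¹:Aˣ):A)) * eSt (-(u:A))
      = hSt true u * ((omSt * omSt) * (omSt * omSt)) := by
  have s1 : omSt * xSt false (-((u⁻¹:Aˣ):A)) = xSt true ((u⁻¹:Aˣ):A) * omSt := by
    have h := om_mul_x (-((u⁻¹:Aˣ):A))
    rwa [neg_neg] at h
  have s2 : xSt false (-(u:A)) * xSt true ((u⁻¹:Aˣ):A) * xSt false (-(u:A))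
      = wSt false (-u) := by
    simp only [wSt, Units.val_neg, inv_neg, neg_neg, Bool.not_false]
  have s3 : wSt false (-u) = wSt true u⁻¹ := by
    rw [wSt_flip false (-u)]
    simp only [inv_neg, neg_neg, Bool.not_false]
  simp only [eSt]
  calc omSt * xSt false (-(u:A)) * (omSt * xSt false (-((u⁻¹:Aˣ):A))) *
        (omSt * xSt false (-(u:A)))
      = omSt * xSt false (-(u:A)) * (xSt true ((u⁻¹:Aˣ):A) * omSt) *
        (omSt * xSt false (-(u:A))) := by rw [s1]
    _ = omSt * ((xSt false (-(u:A)) * xSt true ((u⁻¹:Aˣ):A)) *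
          ((omSt * omSt) * xSt false (-(u:A)))) := by group
    _ = omSt * ((xSt false (-(u:A)) * xSt true ((u⁻¹:Aˣ):A)) *
          (xSt false (-(u:A)) * (omSt * omSt))) := by
        rw [om_sq_central (xSt false (-(u:A)))]
    _ = omSt * (xSt false (-(u:A)) * xSt true ((u⁻¹:Aˣ):A) * xSt false (-(u:A))) *
          (omSt * omSt) := by group
    _ = omSt * wSt true u⁻¹ * (omSt * omSt) := by rw [s2, s3]
    _ = omSt * (hSt true u⁻¹ * omSt) * (omSt * omSt) := by rw [w_true_hom]
    _ = (omSt * hSt true u⁻¹ * omSt⁻¹) * ((omSt * omSt) * (omSt * omSt)) := by group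
    _ = hSt true u * ((omSt * omSt) * (omSt * omSt)) := by
        rw [om_conj_h_true, inv_inv]

lemma G2_eq (a b : A) :
    eSt a * eSt (0:A) * eSt b = (hSt true (-1:Aˣ))⁻¹ * eSt (a + b) := by
  simp only [eSt]
  rw [xSt_zero]
  calc omSt * xSt false a * (omSt * 1) * (omSt * xSt false b)
      = omSt * (xSt false a * ((omSt * omSt) * xSt false b)) := by group
    _ = omSt * (xSt false a * (xSt false b * (omSt * omSt))) := by
        rw [om_sq_central (xSt false b)]
    _ = omSt * ((xSt false a * xSt false b) * (omSt * omSt)) := by group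
    _ = omSt * (xSt false (a+b) * (omSt * omSt)) := by rw [xSt_add]
    _ = omSt * ((omSt * omSt) * xSt false (a+b)) := by
        rw [om_sq_central (xSt false (a+b))]
    _ = (hSt true (-1:Aˣ))⁻¹ * (omSt * xSt false (a+b)) := by rw [← om_sq_eq]; group

lemma G3_eq (u : Aˣ) (a : A) :
    hSt true u * eSt a * hSt true u
      = eSt ((u:A)^2 * a) * (hSt true u⁻¹ * hSt true u) := by
  have c1 : hSt true u * omSt = omSt * hSt true u⁻¹ := by
    have h := om_conj_h_true (A := A) u⁻¹
    rw [inv_inv] at h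
    exact (comm_of_conj h).symm
  have c2 : hSt true u⁻¹ * xSt false a = xSt false ((u:A)^2 * a) * hSt true u⁻¹ := by
    have h := h_conj_other true u⁻¹ a
    rw [inv_inv] at h
    exact comm_of_conj h
  simp only [eSt]
  calc hSt true u * (omSt * xSt false a) * hSt true u
      = (hSt true u * omSt) * xSt false a * hSt true u := by group
    _ = (omSt * hSt true u⁻¹) * xSt false a * hSt true u := by rw [c1]
    _ = omSt * (hSt true u⁻¹ * xSt false a) * hSt true u := by group
    _ = omSt * (xSt false ((u:A)^2 * a) * hSt true u⁻¹) * hSt true u := by rw [c2]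
    _ = omSt * xSt false ((u:A)^2 * a) * (hSt true u⁻¹ * hSt true u) := by group

/-! ### The quotient St(2,A)/C(2,A) -/

/-- The projection St(2,A) → St(2,A)/C(2,A). -/
def piSt : St2 A →* St2 A ⧸ C2 A := QuotientGroup.mk' (C2 A)

lemma pi_symbol (u v : Aˣ) : piSt (symbolSt u v) = 1 :=
  (QuotientGroup.eq_one_iff _).mpr (Subgroup.subset_normalClosure ⟨u, v, rfl⟩)

lemma pi_h_mul (u v : Aˣ) :
    piSt (hSt true u) * piSt (hSt true v) = piSt (hSt true (u * v)) := by
  have h := pi_symbol (A := A) u v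
  rwa [symbolSt, _root_.map_mul, _root_.map_mul, map_inv, mul_inv_eq_one] at h

lemma pi_h_one : piSt (hSt true (1:Aˣ)) = (1 : St2 A ⧸ C2 A) := by
  rw [h_true_one, _root_.map_one]

lemma pi_h_neg_one_sq :
    piSt (hSt true (-1:Aˣ)) * piSt (hSt true (-1:Aˣ)) = (1 : St2 A ⧸ C2 A) := by
  rw [pi_h_mul, neg_mul_neg, one_mul, pi_h_one]

lemma pi_h_neg_one_inv :
    (piSt (hSt true (-1:Aˣ)))⁻¹ = piSt (hSt true (-1:Aˣ)) :=
  inv_eq_of_mul_eq_one_right pi_h_neg_one_sq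

lemma pi_om_sq_sq : piSt ((omSt (A := A) * omSt) * (omSt * omSt)) = 1 := by
  rw [om_sq_eq, _root_.map_mul, map_inv, pi_h_neg_one_inv, pi_h_neg_one_sq]

/-- The generator images for γ. -/
def ggen : A → St2 A ⧸ C2 A := fun a => piSt (eSt a)

lemma lift_ggen_hFree (u : Aˣ) :
    FreeGroup.lift (ggen (A := A)) (hFree u) = piSt (hSt true u) := by
  simp only [hFree, _root_.map_mul, FreeGroup.lift_apply_of, ggen]
  rw [← _root_.map_mul, ← _root_.map_mul, H_eq, _root_.map_mul, pi_om_sq_sq, mul_one]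

lemma gamma_rels : ∀ r ∈ CRels A, FreeGroup.lift (ggen (A := A)) r = 1 := by
  rintro r ((⟨u, v, rfl⟩ | ⟨a, b, rfl⟩) | ⟨u, a, rfl⟩)
  · rw [_root_.map_mul, _root_.map_mul, map_inv, lift_ggen_hFree, lift_ggen_hFree,
      lift_ggen_hFree, pi_h_mul, mul_inv_cancel]
  · simp only [_root_.map_mul, map_inv, FreeGroup.lift_apply_of, lift_ggen_hFree, ggen]
    rw [mul_inv_eq_one]
    calc piSt (eSt a) * piSt (eSt (0:A)) * piSt (eSt b)
        = piSt ((hSt true (-1:Aˣ))⁻¹ * eSt (a+b)) := by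
          rw [← _root_.map_mul, ← _root_.map_mul, G2_eq]
      _ = piSt (hSt true (-1:Aˣ)) * piSt (eSt (a+b)) := by
          rw [_root_.map_mul, map_inv, pi_h_neg_one_inv]
  · simp only [_root_.map_mul, map_inv, FreeGroup.lift_apply_of, lift_ggen_hFree, ggen]
    rw [mul_inv_eq_one]
    calc piSt (hSt true u) * piSt (eSt a) * piSt (hSt true u)
        = piSt (hSt true u * eSt a * hSt true u) := by
          rw [_root_.map_mul, _root_.map_mul]
      _ = piSt (eSt ((u:A)^2 * a)) * (piSt (hSt true u⁻¹) * piSt (hSt true u)) := by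
          rw [G3_eq, _root_.map_mul, _root_.map_mul]
      _ = piSt (eSt ((u:A)^2 * a)) := by
          rw [pi_h_mul, inv_mul_cancel, pi_h_one, mul_one]

/-- The homomorphism γ : C(A) → St(2,A)/C(2,A). -/
def gammaHom : CGroup A →* St2 A ⧸ C2 A := PresentedGroup.toGroup gamma_rels

@[simp] lemma gamma_eps (a : A) : gammaHom (epsC a) = piSt (eSt a) :=
  PresentedGroup.toGroup.of gamma_rels


/-! ### γ and δ̄ are mutually inverse -/

lemma dg_id : (deltaBar (A := A)).comp gammaHom = MonoidHom.id (CGroup A) := by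
  apply PresentedGroup.ext
  intro a
  show deltaBar (gammaHom (epsC a)) = epsC a
  rw [gamma_eps]
  have h0 : deltaBar (piSt (eSt a)) = deltaHom (eSt a) := QuotientGroup.lift_mk' _ _ _
  rw [h0, eSt, omSt, _root_.map_mul, delta_w_false, delta_x, neg_neg, hC_one, mul_one,
    dgen_false]
  group

lemma gd_id : (gammaHom (A := A)).comp deltaBar = MonoidHom.id (St2 A ⧸ C2 A) := by
  apply QuotientGroup.monoidHom_ext
  apply PresentedGroup.ext
  intro p
  obtain ⟨b, t⟩ := p
  show gammaHom (deltaBar (piSt (xSt b t))) = piSt (xSt b t)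
  have h0 : deltaBar (piSt (xSt b t)) = deltaHom (xSt b t) := QuotientGroup.lift_mk' _ _ _
  rw [h0, delta_x]
  have hz : eSt (0:A) = omSt (A := A) := by rw [eSt, xSt_zero, mul_one]
  cases b
  · rw [dgen_false, _root_.map_mul, map_inv, gamma_eps, gamma_eps, hz, eSt,
      ← map_inv, ← _root_.map_mul]
    congr 1
    group
  · rw [dgen_true, _root_.map_mul, map_inv, gamma_eps, gamma_eps, hz, eSt,
      ← map_inv, ← _root_.map_mul]
    congr 1
    have h := om_conj_x_false (-t)
    rwa [neg_neg] at h

/-- γ as a group isomorphism C(A) ≃ St(2,A)/C(2,A). -/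
def gammaEquiv : CGroup A ≃* St2 A ⧸ C2 A where
  toFun := gammaHom
  invFun := deltaBar
  left_inv x := DFunLike.congr_fun (dg_id (A := A)) x
  right_inv x := DFunLike.congr_fun (gd_id (A := A)) x
  map_mul' x y := _root_.map_mul gammaHom x y

lemma gammaHom_surjective : Function.Surjective (gammaHom (A := A)) :=
  (gammaEquiv (A := A)).surjective

/-! ### Factorizations through SL₂ -/

lemma phi_w (b : Bool) (u : Aˣ) : phiSt A (wSt b u) = WSL b u := by
  rw [wSt, _root_.map_mul, _root_.map_mul]
  simp only [phiSt_xSt]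
  exact stGen_w b u

lemma WSL_mul_WSL_neg_one (u : Aˣ) : WSL true u * WSL true (-1:Aˣ) = DSL u := by
  apply Subtype.ext
  show (!![0, (u:A); -((u⁻¹:Aˣ):A), 0] *
    !![0, ((-1:Aˣ):A); -(((-1:Aˣ)⁻¹:Aˣ):A), 0]) = _
  ext i j
  fin_cases i <;> fin_cases j <;>
    simp [DSL, Matrix.mul_apply, Fin.sum_univ_two, inv_neg]

lemma phi_h_true (u : Aˣ) : phiSt A (hSt true u) = DSL u := by
  rw [hSt, _root_.map_mul, phi_w, phi_w]
  exact WSL_mul_WSL_neg_one u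

lemma phi_symbol (u v : Aˣ) : phiSt A (symbolSt u v) = 1 := by
  rw [symbolSt, _root_.map_mul, _root_.map_mul, map_inv, phi_h_true, phi_h_true,
    phi_h_true, DSL_mul, mul_inv_cancel]

lemma C2_le_ker_phi : C2 A ≤ (phiSt A).ker := by
  apply Subgroup.normalClosure_le_normal
  rintro x ⟨u, v, rfl⟩
  exact MonoidHom.mem_ker.mpr (phi_symbol u v)

/-- φ̄ : St(2,A)/C(2,A) → SL₂(A). -/
def phiBar : St2 A ⧸ C2 A →* Matrix.SpecialLinearGroup (Fin 2) A :=
  QuotientGroup.lift (C2 A) (phiSt A) C2_le_ker_phi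

lemma WSL_mul_E21 (a : A) : WSL false (-1:Aˣ) * E21SL a = ESL a := by
  apply Subtype.ext
  show (!![0, -(((-1:Aˣ)⁻¹:Aˣ):A); ((-1:Aˣ):A), 0] * !![1, 0; a, 1]) = _
  ext i j
  fin_cases i <;> fin_cases j <;>
    simp [ESL, Matrix.mul_apply, Fin.sum_univ_two, inv_neg]

lemma psi_factor : psiC A = (phiBar (A := A)).comp gammaHom := by
  apply PresentedGroup.ext
  intro a
  show psiC A (epsC a) = phiBar (gammaHom (epsC a))
  rw [psiC_epsC, gamma_eps]
  have h0 : phiBar (piSt (eSt a)) = phiSt A (eSt a) :=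
    QuotientGroup.lift_mk' (C2 A) C2_le_ker_phi (eSt a)
  rw [h0, eSt, omSt, _root_.map_mul, phi_w, phiSt_xSt]
  exact (WSL_mul_E21 a).symm

lemma phi_factor : phiSt A = (phiBar (A := A)).comp piSt := by
  apply PresentedGroup.ext
  intro p
  exact (QuotientGroup.lift_mk' (C2 A) C2_le_ker_phi _).symm

lemma ker_map_eq :
    Subgroup.map (gammaHom (A := A)) (psiC A).ker
      = Subgroup.map (piSt (A := A)) (phiSt A).ker := by
  have h1 : (psiC A).ker = Subgroup.comap gammaHom (phiBar (A := A)).ker := by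
    rw [psi_factor]
    exact (MonoidHom.comap_ker _ _).symm
  have h2 : (phiSt A).ker = Subgroup.comap (piSt (A := A)) (phiBar (A := A)).ker := by
    rw [phi_factor]
    exact (MonoidHom.comap_ker _ _).symm
  have hs : Function.Surjective (piSt (A := A)) := QuotientGroup.mk'_surjective (C2 A)
  rw [h1, h2, Subgroup.map_comap_eq_self_of_surjective gammaHom_surjective,
    Subgroup.map_comap_eq_self_of_surjective hs]

end Stmt18

/-- ε(a) ↦ [w₂₁(-1)x₂₁(a)] induces a well-defined group isomorphism
γ : C(A) → St(2,A)/C(2,A), which restricts to an isomorphism from U(A) = ker ψ onto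
K₂(2,A)/C(2,A); in particular U(A) ≅ K₂(2,A)/C(2,A). -/
theorem stmt18 (A : Type*) [CommRing A] :
    ∃ γ : CGroup A ≃* (St2 A ⧸ C2 A),
      (∀ a : A, γ (epsC a) = QuotientGroup.mk (wSt false (-1) * xSt false a)) ∧
      Subgroup.map γ.toMonoidHom (psiC A).ker =
        Subgroup.map (QuotientGroup.mk' (C2 A)) (phiSt A).ker ∧
      Nonempty
        ((psiC A).ker ≃* Subgroup.map (QuotientGroup.mk' (C2 A)) (phiSt A).ker) := by
  have htm : (Stmt18.gammaEquiv (A := A)).toMonoidHom = Stmt18.gammaHom :=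
    MonoidHom.ext fun x => rfl
  have hker : Subgroup.map (Stmt18.gammaEquiv (A := A)).toMonoidHom (psiC A).ker
      = Subgroup.map (QuotientGroup.mk' (C2 A)) (phiSt A).ker := by
    rw [htm]
    exact Stmt18.ker_map_eq
  refine ⟨Stmt18.gammaEquiv, fun a => ?_, hker, ?_⟩
  · show Stmt18.gammaHom (epsC a) = _
    rw [Stmt18.gamma_eps]
    rfl
  · exact ⟨((Stmt18.gammaEquiv (A := A)).subgroupMap (psiC A).ker).trans
      (MulEquiv.subgroupCongr hker)⟩
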